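/- Let S and V be finite subsets of ℤⁿ, regarded inside Euclidean space ℝⁿ, and set Δ := convexHull ℝ S. Suppose 0 lies in the interior of Δ and the polar dual Δ° := {v ∈ ℝⁿ : ⟨m, v⟩ ≥ -1 for all m ∈ Δ} equals convexHull ℝ V. Then the only lattice point of ℤⁿ in the interior of Δ is 0. -/

import Mathlib

/-- The polar dual of a set in Euclidean `ℝⁿ` (with the standard inner product):
`S° = {v | ⟨m, v⟩ ≥ -1 for all m ∈ S}`. -/
def polarDual {n : ℕ} (S : Set (Fin n → ℝ)) : Set (Fin n → ℝ) :=
  {v | ∀ m ∈ S, ∑ i, m i * v i ≥ -1}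

/-- The inclusion of lattice points `ℤⁿ ⊆ ℝⁿ`. -/
def latticeCast {n : ℕ} (f : Fin n → ℤ) : Fin n → ℝ := fun i => (f i : ℝ)

/-- A reflexive lattice polytope (a lattice polytope containing `0` in its
interior whose polar dual is again a lattice polytope) has `0` as its only
interior lattice point. -/
theorem reflexive_unique_interior_lattice_point (n : ℕ) (S V : Finset (Fin n → ℤ))
    (Δ : Set (Fin n → ℝ))
    (hΔ : Δ = convexHull ℝ (latticeCast '' (S : Set (Fin n → ℤ))))
    (h0 : (0 : Fin n → ℝ) ∈ interior Δ)
    (hdual : polarDual Δ = convexHull ℝ (latticeCast '' (V : Set (Fin n → ℤ)))) :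
    {m : Fin n → ℤ | latticeCast m ∈ interior Δ} = {0} := by
  have hcast0 : latticeCast (0 : Fin n → ℤ) = 0 := by funext i; simp [latticeCast]
  ext m
  simp only [Set.mem_setOf_eq, Set.mem_singleton_iff]
  constructor
  · intro hm
    by_contra hm0
    set M : Fin n → ℝ := latticeCast m with hM
    -- linearity of the functional ⟨M, ·⟩
    have lin : IsLinearMap ℝ (fun v : Fin n → ℝ => ∑ i, M i * v i) := by
      constructor
      · intro x y; simp [mul_add, Finset.sum_add_distrib]
      · intro c x
        simp [Finset.mul_sum, smul_eq_mul]
        apply Finset.sum_congr rfl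
        intro i _; ring
    -- Step A: strict inequality for interior points
    have hA : ∀ v ∈ polarDual Δ, (-1 : ℝ) < ∑ i, M i * v i := by
      intro v hv
      obtain ⟨ε, hε, hball⟩ := Metric.mem_nhds_iff.mp (mem_interior_iff_mem_nhds.mp hm)
      set t : ℝ := ε / (2 * (‖M‖ + 1)) with ht
      have hMn : (0:ℝ) < ‖M‖ + 1 := by positivity
      have htpos : 0 < t := by positivity
      have hmem : (1 + t) • M ∈ Δ := by
        apply hball
        simp only [Metric.mem_ball, dist_eq_norm]
        have : (1 + t) • M - M = t • M := by
          rw [add_smul, one_smul]; abel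
        rw [this, norm_smul, Real.norm_eq_abs, abs_of_pos htpos]
        calc t * ‖M‖ ≤ t * (‖M‖ + 1) := by nlinarith [norm_nonneg M]
          _ = ε / 2 := by rw [ht]; field_simp
          _ < ε := by linarith
      have h1 := hv _ hmem
      have hsum : ∑ i, ((1 + t) • M) i * v i = (1 + t) * ∑ i, M i * v i := by
        rw [Finset.mul_sum]
        apply Finset.sum_congr rfl
        intro i _; simp [Pi.smul_apply, smul_eq_mul]; ring
      rw [hsum] at h1
      nlinarith [h1, htpos]
    -- Step B: ⟨M, latticeCast w⟩ ≥ 0 for w ∈ V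
    have hB : ∀ w ∈ (V : Set (Fin n → ℤ)), (0:ℝ) ≤ ∑ i, M i * latticeCast w i := by
      intro w hw
      have hwmem : latticeCast w ∈ polarDual Δ := by
        rw [hdual]
        exact subset_convexHull ℝ _ ⟨w, hw, rfl⟩
      have h1 := hA _ hwmem
      have heq : ∑ i, M i * latticeCast w i = ((∑ i, m i * w i : ℤ) : ℝ) := by
        push_cast [hM, latticeCast]; ring
      rw [heq] at h1 ⊢
      have : (-1 : ℤ) < ∑ i, m i * w i := by exact_mod_cast h1
      have : (0 : ℤ) ≤ ∑ i, m i * w i := by omega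
      exact_mod_cast this
    -- Step C: ⟨M, ·⟩ ≥ 0 on all of the polar dual
    have hC : ∀ v ∈ polarDual Δ, (0:ℝ) ≤ ∑ i, M i * v i := by
      intro v hv
      rw [hdual] at hv
      refine convexHull_min ?_ (convex_halfSpace_ge lin 0) hv
      rintro _ ⟨w, hw, rfl⟩
      exact hB w hw
    -- S is nonempty
    have hSne : S.Nonempty := by
      by_contra hS
      rw [Finset.not_nonempty_iff_eq_empty] at hS
      have : Δ = ∅ := by rw [hΔ, hS]; simp
      rw [this] at h0; simp at h0
    -- max of ⟨M, ·⟩ over S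
    obtain ⟨s0, hs0, hmax⟩ :=
      S.exists_max_image (fun s => ∑ i, M i * latticeCast s i) hSne
    set B : ℝ := ∑ i, M i * latticeCast s0 i with hBdef
    have hbound : ∀ x ∈ Δ, ∑ i, M i * x i ≤ B := by
      intro x hx
      rw [hΔ] at hx
      refine convexHull_min ?_ (convex_halfSpace_le lin B) hx
      rintro _ ⟨w, hw, rfl⟩
      exact hmax w hw
    have hMΔ : M ∈ Δ := interior_subset hm
    have hMM : 0 < ∑ i, M i * M i := by
      obtain ⟨i0, hi0⟩ := Function.ne_iff.mp hm0
      apply Finset.sum_pos' (fun i _ => mul_self_nonneg (M i))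
      refine ⟨i0, Finset.mem_univ _, ?_⟩
      have : M i0 ≠ 0 := by
        simp only [hM, latticeCast]
        exact_mod_cast hi0
      exact mul_self_pos.mpr this
    have hBpos : 0 < B := lt_of_lt_of_le hMM (hbound M hMΔ)
    -- the contradicting dual vector
    set v : Fin n → ℝ := (-(1/B)) • M with hv
    have hvdual : v ∈ polarDual Δ := by
      intro x hx
      have h1 := hbound x hx
      have hsum : ∑ i, x i * v i = -(1/B) * ∑ i, M i * x i := by
        rw [Finset.mul_sum]
        apply Finset.sum_congr rfl
        intro i _; simp [hv, Pi.smul_apply, smul_eq_mul]; ring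
      rw [hsum, ge_iff_le]
      have h3 : (1/B) * ∑ i, M i * x i ≤ 1 := by
        rw [div_mul_eq_mul_div, one_mul, div_le_one hBpos]; exact h1
      linarith
    have h2 := hC v hvdual
    have hsum2 : ∑ i, M i * v i = -(1/B) * ∑ i, M i * M i := by
      rw [Finset.mul_sum]
      apply Finset.sum_congr rfl
      intro i _; simp [hv, Pi.smul_apply, smul_eq_mul]; ring
    rw [hsum2] at h2
    have h4 : 0 < (1/B) * ∑ i, M i * M i := by positivity
    linarith
  · rintro rfl
    rw [hcast0]
    exact h0
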